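/- Let n ≥ 2, let φ, ψ : ℝ → ℝ be convex and monotone nondecreasing functions, and let u_1,…,u_n, v_1,…,v_n be vectors in ℝ^d with ‖u_i‖ = ‖v_i‖ = 1 for all i. Define E_pos := (1/n) ∑_{i=1}^n ⟨u_i, v_i⟩ and E_neg := (1/(n(n−1))) ∑_{i≠j} ⟨u_i, v_j⟩. Then (1/(2n)) ∑_{i=1}^n [ ψ( ∑_{j≠i} φ(⟨u_i, v_j⟩ − ⟨u_i, v_i⟩) ) + ψ( ∑_{j≠i} φ(⟨u_j, v_i⟩ − ⟨u_i, v_i⟩) ) ] ≥ ψ( (n−1) · φ( E_neg − E_pos ) ). -/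

import Mathlib

open scoped RealInnerProductSpace
open Finset

lemma sum_offDiag_eq_nested {α M : Type*} [Fintype α] [DecidableEq α] [AddCommMonoid M]
    (F : α × α → M) :
    ∑ p ∈ (univ : Finset α).offDiag, F p = ∑ i, ∑ j ∈ univ.erase i, F (i, j) := by
  rw [show (univ : Finset α).offDiag = (univ ×ˢ univ).filter (fun a : α × α => a.1 ≠ a.2) by ext; simp, Finset.sum_filter, Finset.sum_product]
  refine Finset.sum_congr rfl fun i _ => ?_
  rw [← Finset.filter_ne', Finset.sum_filter]
  exact Finset.sum_congr rfl fun j _ => by simp [ne_comm]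

lemma sum_offDiag_swap {α M : Type*} [Fintype α] [DecidableEq α] [AddCommMonoid M]
    (F : α × α → M) :
    ∑ p ∈ (univ : Finset α).offDiag, F p = ∑ p ∈ (univ : Finset α).offDiag, F p.swap := by
  apply Finset.sum_nbij' (fun p => p.swap) (fun p => p.swap) <;> simp [Finset.mem_offDiag, ne_comm]

theorem stmt_10 {d n : ℕ} (hn : 2 ≤ n)
    (φ ψ : ℝ → ℝ) (hφc : ConvexOn ℝ Set.univ φ) (hφm : Monotone φ)
    (hψc : ConvexOn ℝ Set.univ ψ) (hψm : Monotone ψ)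
    (u v : Fin n → EuclideanSpace ℝ (Fin d))
    (hu : ∀ i, ‖u i‖ = 1) (hv : ∀ i, ‖v i‖ = 1) :
    ψ (((n : ℝ) - 1) *
        φ ((1 / ((n : ℝ) * (n - 1))) * ∑ p ∈ univ.offDiag, ⟪u p.1, v p.2⟫
            - (1 / (n : ℝ)) * ∑ i, ⟪u i, v i⟫))
      ≤ (1 / (2 * (n : ℝ))) *
          ∑ i, (ψ (∑ j ∈ univ.erase i, φ (⟪u i, v j⟫ - ⟪u i, v i⟫))
                + ψ (∑ j ∈ univ.erase i, φ (⟪u j, v i⟫ - ⟪u i, v i⟫))) := by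
  classical
  have hN2 : (2 : ℝ) ≤ (n : ℝ) := by exact_mod_cast hn
  set N : ℝ := (n : ℝ) with hNdef
  have hN0 : 0 < N := by linarith
  have hN1 : 0 < N - 1 := by linarith
  set w : ℝ := 1 / (N * (N - 1)) with hwdef
  have hw0 : 0 ≤ w := by positivity
  have hcardn : ∀ i : Fin n, ((univ : Finset (Fin n)).erase i).card = n - 1 := by
    intro i; rw [Finset.card_erase_of_mem (Finset.mem_univ i), Finset.card_univ, Fintype.card_fin]
  have hcard : (((univ : Finset (Fin n)).offDiag.card : ℝ)) = N * (N - 1) := by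
    rw [Finset.offDiag_card, Finset.card_univ, Fintype.card_fin]
    have h1 : n ≤ n * n := Nat.le_mul_of_pos_left n (by omega)
    rw [Nat.cast_sub h1]
    push_cast
    ring
  set g : Fin n × Fin n → ℝ := fun p => ⟪u p.1, v p.2⟫ - ⟪u p.1, v p.1⟫ with hg
  set h2 : Fin n × Fin n → ℝ := fun p => ⟪u p.2, v p.1⟫ - ⟪u p.1, v p.1⟫ with hh2
  set Spos : ℝ := ∑ i, ⟪u i, v i⟫ with hSpos
  set Scross : ℝ := ∑ p ∈ (univ : Finset (Fin n)).offDiag, ⟪u p.1, v p.2⟫ with hScross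
  have hwsum : ∑ _p ∈ (univ : Finset (Fin n)).offDiag, w = 1 := by
    rw [Finset.sum_const, nsmul_eq_mul, hcard, hwdef]
    field_simp
  -- sum of diagonal terms over offDiag
  have hfst : ∑ p ∈ (univ : Finset (Fin n)).offDiag, ⟪u p.1, v p.1⟫ = (N - 1) * Spos := by
    rw [sum_offDiag_eq_nested (fun p => (⟪u p.1, v p.1⟫ : ℝ))]
    simp only [Finset.sum_const, hcardn, nsmul_eq_mul]
    rw [hSpos, Finset.mul_sum]
    refine Finset.sum_congr rfl fun i _ => ?_
    have : ((n - 1 : ℕ) : ℝ) = N - 1 := by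
      rw [Nat.cast_sub (by omega)]; push_cast; rfl
    rw [this]
  have hswap1 : ∑ p ∈ (univ : Finset (Fin n)).offDiag, ⟪u p.2, v p.1⟫ = Scross := by
    rw [hScross, sum_offDiag_swap (fun p => (⟪u p.1, v p.2⟫ : ℝ))]
    rfl
  -- the common average
  have hsumg : ∑ p ∈ (univ : Finset (Fin n)).offDiag, w • g p
      = w * Scross - (1 / N) * Spos := by
    simp only [smul_eq_mul, hg]
    rw [← Finset.mul_sum, Finset.sum_sub_distrib, hfst, ← hScross]
    rw [hwdef]; field_simp
  have hsumh : ∑ p ∈ (univ : Finset (Fin n)).offDiag, w • h2 p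
      = w * Scross - (1 / N) * Spos := by
    simp only [smul_eq_mul, hh2]
    rw [← Finset.mul_sum, Finset.sum_sub_distrib, hfst, hswap1]
    rw [hwdef]; field_simp
  -- Jensen for φ
  have hφA : φ (w * Scross - (1 / N) * Spos)
      ≤ ∑ p ∈ (univ : Finset (Fin n)).offDiag, w * φ (g p) := by
    rw [← hsumg]
    exact hφc.map_sum_le (fun _ _ => hw0) hwsum (fun _ _ => Set.mem_univ _)
  have hφB : φ (w * Scross - (1 / N) * Spos)
      ≤ ∑ p ∈ (univ : Finset (Fin n)).offDiag, w * φ (h2 p) := by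
    rw [← hsumh]
    exact hφc.map_sum_le (fun _ _ => hw0) hwsum (fun _ _ => Set.mem_univ _)
  set A : Fin n → ℝ := fun i => ∑ j ∈ univ.erase i, φ (⟪u i, v j⟫ - ⟪u i, v i⟫) with hA
  set B : Fin n → ℝ := fun i => ∑ j ∈ univ.erase i, φ (⟪u j, v i⟫ - ⟪u i, v i⟫) with hB
  have hAsum : ∑ p ∈ (univ : Finset (Fin n)).offDiag, φ (g p) = ∑ i, A i := by
    rw [sum_offDiag_eq_nested (fun p => φ (g p))]
  have hBsum : ∑ p ∈ (univ : Finset (Fin n)).offDiag, φ (h2 p) = ∑ i, B i := by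
    rw [sum_offDiag_eq_nested (fun p => φ (h2 p))]
  have hφA' : φ (w * Scross - (1 / N) * Spos) ≤ w * ∑ i, A i := by
    have e : ∑ p ∈ (univ : Finset (Fin n)).offDiag, w * φ (g p) = w * ∑ i, A i := by
      rw [← Finset.mul_sum, hAsum]
    exact hφA.trans e.le
  have hφB' : φ (w * Scross - (1 / N) * Spos) ≤ w * ∑ i, B i := by
    have e : ∑ p ∈ (univ : Finset (Fin n)).offDiag, w * φ (h2 p) = w * ∑ i, B i := by
      rw [← Finset.mul_sum, hBsum]
    exact hφB.trans e.le
  set Φ : ℝ := φ (w * Scross - (1 / N) * Spos) with hΦ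
  have key : (N - 1) * Φ ≤ (1 / (2 * N)) * (∑ i, A i + ∑ i, B i) := by
    have h1 : ((N - 1) / 2) * Φ ≤ ((N - 1) / 2) * (w * ∑ i, A i) :=
      mul_le_mul_of_nonneg_left hφA' (by linarith)
    have h2' : ((N - 1) / 2) * Φ ≤ ((N - 1) / 2) * (w * ∑ i, B i) :=
      mul_le_mul_of_nonneg_left hφB' (by linarith)
    have e : ((N - 1) / 2) * w = 1 / (2 * N) := by
      rw [hwdef]; field_simp
    calc (N - 1) * Φ = ((N - 1) / 2) * Φ + ((N - 1) / 2) * Φ := by ring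
      _ ≤ ((N - 1) / 2) * (w * ∑ i, A i) + ((N - 1) / 2) * (w * ∑ i, B i) := add_le_add h1 h2'
      _ = (1 / (2 * N)) * (∑ i, A i + ∑ i, B i) := by rw [← mul_assoc, ← mul_assoc, e]; ring
  -- Jensen for ψ
  have hψJ : ψ ((1 / (2 * N)) * (∑ i, A i + ∑ i, B i))
      ≤ (1 / (2 * N)) * ∑ i, (ψ (A i) + ψ (B i)) := by
    have hwn : ∀ i ∈ (univ : Finset (Fin n)), (0 : ℝ) ≤ 1 / N := fun _ _ => by positivity
    have hwn1 : ∑ _i ∈ (univ : Finset (Fin n)), (1 / N : ℝ) = 1 := by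
      rw [Finset.sum_const, nsmul_eq_mul, Finset.card_univ, Fintype.card_fin, ← hNdef]
      field_simp
    have hJ := hψc.map_sum_le (p := fun i => (A i + B i) / 2) hwn hwn1
      (fun _ _ => Set.mem_univ _)
    have harg : ∑ i, (1 / N : ℝ) • ((A i + B i) / 2)
        = (1 / (2 * N)) * (∑ i, A i + ∑ i, B i) := by
      simp only [smul_eq_mul]
      rw [← Finset.mul_sum, ← Finset.sum_div, Finset.sum_add_distrib]
      ring
    rw [harg] at hJ
    refine hJ.trans ?_
    rw [Finset.mul_sum]
    refine Finset.sum_le_sum fun i _ => ?_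
    have h2pt := hψc.2 (Set.mem_univ (A i)) (Set.mem_univ (B i))
      (by norm_num : (0:ℝ) ≤ 1/2) (by norm_num : (0:ℝ) ≤ 1/2) (by norm_num)
    simp only [smul_eq_mul] at h2pt
    have e1 : (1/2 : ℝ) * A i + (1/2) * B i = (A i + B i) / 2 := by ring
    rw [e1] at h2pt
    have := mul_le_mul_of_nonneg_left h2pt (by positivity : (0:ℝ) ≤ 1 / N)
    calc (1 / N : ℝ) * ψ ((A i + B i) / 2) ≤ (1 / N) * (1/2 * ψ (A i) + 1/2 * ψ (B i)) := this
      _ = (1 / (2 * N)) * (ψ (A i) + ψ (B i)) := by ring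
  calc ψ ((N - 1) * Φ) ≤ ψ ((1 / (2 * N)) * (∑ i, A i + ∑ i, B i)) := hψm key
    _ ≤ (1 / (2 * N)) * ∑ i, (ψ (A i) + ψ (B i)) := hψJ
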